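/- Let $r \ge 2$, let $p \ge 2$, and let $G$ be an $r$-uniform hypergraph on vertex set $[n]$ with vertex degrees $d_1, \ldots, d_n$. Then $\rho^{(p)}(G) \ge (r-1)!\, n^{1 - r/p} \left( \frac{1}{n} \left( d_1^{p/(p-1)} + \cdots + d_n^{p/(p-1)} \right) \right)^{(p-1)/p}$. -/

import Mathlib

open Finset

/-- The `ℓ^p` norm of a vector in `ℝ^n`. -/
noncomputable def lpNorm {n : ℕ} (p : ℝ) (x : Fin n → ℝ) : ℝ :=
  (∑ i, |x i| ^ p) ^ (1 / p)

/-- The `p`-spectral radius of an `r`-uniform hypergraph `G` on `[n]`: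
`ρ⁽ᵖ⁾(G) = max_{|x|_p = 1} r! ∑_{e ∈ E(G)} ∏_{i ∈ e} x_i`. -/
noncomputable def hypSpecRad {n : ℕ} (r : ℕ) (p : ℝ)
    (G : Finset (Finset (Fin n))) : ℝ :=
  sSup {v | ∃ x : Fin n → ℝ, lpNorm p x = 1 ∧
    v = (r.factorial : ℝ) * ∑ e ∈ G, ∏ i ∈ e, x i}

/-- Bernoulli-consequence 1: `(k+1)^(k+1) * A * s^k ≤ k^k * (A+s)^(k+1)` (AM-GM). -/
lemma key1 (k : ℕ) {A s : ℝ} (hA : 0 ≤ A) (hs : 0 ≤ s) :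
    ((k : ℝ) + 1) ^ (k + 1) * A * s ^ k ≤ (k : ℝ) ^ k * (A + s) ^ (k + 1) := by
  rcases Nat.eq_zero_or_pos k with hk | hk
  · subst hk; simpa using by nlinarith
  rcases eq_or_lt_of_le hs with hs0 | hs0
  · -- s = 0, k ≥ 1
    rw [← hs0]
    rw [zero_pow (by omega)]
    have : (0:ℝ) ≤ (k : ℝ) ^ k * (A + 0) ^ (k + 1) := by positivity
    nlinarith
  · set u : ℝ := (k : ℝ) with hu
    have hu1 : (0:ℝ) < u := by rw [hu]; exact_mod_cast hk
    have hden : (0:ℝ) < (u + 1) * s := by positivity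
    set h : ℝ := (u * A - s) / ((u + 1) * s) with hh
    have hh2 : -2 ≤ h := by
      rw [hh, le_div_iff₀ hden]
      nlinarith
    have hb := one_add_mul_le_pow hh2 (k + 1)
    have e1 : 1 + ((k : ℕ) + 1 : ℕ) * h = u * A / s := by
      push_cast
      rw [hh]
      field_simp
      ring
    have e2 : 1 + h = u * (A + s) / ((u + 1) * s) := by
      rw [hh]; field_simp; ring
    push_cast at hb
    rw [show ((k:ℝ) + 1) * h = ((k : ℕ) + 1 : ℕ) * h by push_cast; ring] at hb
    rw [e1, e2] at hb
    rw [div_pow, div_le_div_iff₀ hs0 (by positivity)] at hb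
    -- hb : u * A * ((u+1)*s)^(k+1) ≤ (u*(A+s))^(k+1) * s
    have expand : u * A * ((u + 1) * s) ^ (k + 1) = (u * s) * (((u:ℝ)+1) ^ (k+1) * A * s ^ k) := by
      rw [mul_pow]; ring
    have expand2 : (u * (A + s)) ^ (k + 1) * s = (u * s) * ((u:ℝ) ^ k * (A + s) ^ (k+1)) := by
      rw [mul_pow]; ring
    rw [expand, expand2] at hb
    exact le_of_mul_le_mul_left hb (by positivity)

/-- Bernoulli-consequence 2: for `k ≥ 1`:
`(k+1)^(k-1) * s^(k-1) * (s + k^2*a) ≤ k^k * (a+s)^k`. -/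
lemma key2 {k : ℕ} (hk : 1 ≤ k) {a s : ℝ} (ha : 0 ≤ a) (hs : 0 ≤ s) :
    ((k : ℝ) + 1) ^ (k - 1) * s ^ (k - 1) * (s + (k : ℝ) ^ 2 * a)
      ≤ (k : ℝ) ^ k * (a + s) ^ k := by
  have hu1 : (0:ℝ) < (k : ℝ) := by exact_mod_cast hk
  rcases eq_or_lt_of_le hs with hs0 | hs0
  · rcases Nat.eq_or_lt_of_le hk with hk1 | hk2
    · -- k = 1, s = 0
      subst hk1; rw [← hs0]; norm_num
    · -- k ≥ 2, s = 0
      rw [← hs0, zero_pow (by omega)]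
      have : (0:ℝ) ≤ (k : ℝ) ^ k * (a + 0) ^ k := by positivity
      nlinarith
  · set u : ℝ := (k : ℝ) with hu
    have hden : (0:ℝ) < (u + 1) * s := by positivity
    set h : ℝ := (u * a - s) / ((u + 1) * s) with hh
    have hh2 : -2 ≤ h := by
      rw [hh, le_div_iff₀ hden]; nlinarith
    have hb := one_add_mul_le_pow hh2 k
    have e1 : 1 + (k : ℝ) * h = (s + u ^ 2 * a) / ((u + 1) * s) := by
      rw [hh]; field_simp; ring
    rw [show ((k:ℕ):ℝ) * h = (k : ℝ) * h from rfl, e1] at hb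
    have e2 : 1 + h = u * (a + s) / ((u + 1) * s) := by
      rw [hh]; field_simp; ring
    rw [e2, div_pow, div_le_div_iff₀ (by positivity) (by positivity)] at hb
    -- hb : (s + u^2*a) * ((u+1)*s)^k ≤ (u*(a+s))^k * ((u+1)*s)
    obtain ⟨m, rfl⟩ : ∃ m, k = m + 1 := ⟨k - 1, by omega⟩
    have expand : (s + u ^ 2 * a) * ((u + 1) * s) ^ (m+1)
        = ((u+1) * s) * ((u + 1) ^ (m+1-1) * s ^ (m+1-1) * (s + u ^ 2 * a)) := by
      simp only [Nat.add_sub_cancel]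
      rw [mul_pow]; ring
    have expand2 : (u * (a + s)) ^ (m+1) * ((u + 1) * s)
        = ((u+1) * s) * (u ^ (m+1) * (a + s) ^ (m+1)) := by
      rw [mul_pow]; ring
    rw [expand, expand2] at hb
    exact le_of_mul_le_mul_left hb hden

/-- `(R - σ) * σ^(r-1) ≤ (R-1)^(r-1)` for `R = r ≥ 2`, `0 ≤ σ`. -/
lemma key3 {r : ℕ} (hr : 2 ≤ r) {σ : ℝ} (hσ : 0 ≤ σ) :
    ((r : ℝ) - σ) * σ ^ (r - 1) ≤ ((r : ℝ) - 1) ^ (r - 1) := by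
  have hR : (2:ℝ) ≤ (r : ℝ) := by exact_mod_cast hr
  rcases eq_or_lt_of_le hσ with h0 | h0
  · rw [← h0, zero_pow (by omega), mul_zero]
    have h1 : (0:ℝ) ≤ (r:ℝ) - 1 := by linarith
    positivity
  · set h : ℝ := ((r:ℝ) - 1 - σ) / σ with hh
    have hh2 : -2 ≤ h := by
      rw [hh, le_div_iff₀ h0]; nlinarith
    have hb := one_add_mul_le_pow hh2 (r - 1)
    have e2 : σ * (1 + h) = (r:ℝ) - 1 := by rw [hh]; field_simp; ring
    -- multiply hb by σ^(r-1)
    have hmul : σ ^ (r-1) * (1 + ((r-1 : ℕ):ℝ) * h) ≤ σ ^ (r-1) * (1 + h) ^ (r-1) := by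
      apply mul_le_mul_of_nonneg_left hb (by positivity)
    rw [← mul_pow, e2] at hmul
    refine le_trans ?_ hmul
    have hcast : ((r-1 : ℕ):ℝ) = (r:ℝ) - 1 := by
      have : (1:ℕ) ≤ r := by omega
      push_cast [Nat.cast_sub this]; ring
    rw [hcast]
    -- (R - σ) * σ^(r-1) ≤ σ^(r-1) * (1 + (R-1)*h)
    have hfact : σ ^ (r-1) = σ ^ (r-2) * σ := by
      rw [← pow_succ]; congr 1; omega
    rw [hfact]
    have hquad : ((r:ℝ) - σ) * σ * σ ≤ (1 + ((r:ℝ)-1) * h) * σ * σ := by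
      have : (1 + ((r:ℝ)-1) * h) * σ = σ + ((r:ℝ)-1) * ((r:ℝ)-1-σ) := by
        rw [hh]; field_simp
      nlinarith [sq_nonneg (σ - ((r:ℝ)-1))]
    calc ((r:ℝ) - σ) * (σ ^ (r-2) * σ) = σ ^ (r-2) * (((r:ℝ) - σ) * σ) := by ring
      _ ≤ σ ^ (r-2) * ((1 + ((r:ℝ)-1) * h) * σ) := by
          exact mul_le_mul_of_nonneg_left
            (le_of_mul_le_mul_right hquad h0) (by positivity)
      _ = σ ^ (r-2) * σ * (1 + ((r:ℝ)-1) * h) := by ring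

lemma cast_pow_self_pos (k : ℕ) : (0:ℝ) < (k : ℝ) ^ k := by
  rcases Nat.eq_zero_or_pos k with h | h
  · subst h; norm_num
  · exact pow_pos (by exact_mod_cast h) k

/-- Aam-GM: `card^card * ∏ ν ≤ (∑ ν)^card`. -/
lemma amgm_pow {ι : Type*} [DecidableEq ι] (s : Finset ι) (ν : ι → ℝ) :
    (∀ i ∈ s, 0 ≤ ν i) →
    (s.card : ℝ) ^ s.card * ∏ i ∈ s, ν i ≤ (∑ i ∈ s, ν i) ^ s.card := by
  induction s using Finset.cons_induction with
  | empty => intro _; simp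
  | cons a s ha ih =>
    intro hν
    have hA : 0 ≤ ν a := hν a (mem_cons_self a s)
    have hν' : ∀ i ∈ s, 0 ≤ ν i := fun i hi => hν i (mem_cons_of_mem hi)
    have hP : 0 ≤ ∏ i ∈ s, ν i := prod_nonneg hν'
    have hS : 0 ≤ ∑ i ∈ s, ν i := sum_nonneg hν'
    have IH := ih hν'
    rw [card_cons, prod_cons, sum_cons]
    set k := s.card
    have hkpos := cast_pow_self_pos k
    rw [← mul_le_mul_iff_right₀ hkpos]
    push_cast
    calc (k:ℝ)^k * (((k : ℝ) + 1) ^ (k + 1) * (ν a * ∏ i ∈ s, ν i))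
        = ((k : ℝ) + 1) ^ (k + 1) * ν a * ((k:ℝ)^k * ∏ i ∈ s, ν i) := by ring
      _ ≤ ((k : ℝ) + 1) ^ (k + 1) * ν a * (∑ i ∈ s, ν i) ^ k := by
          apply mul_le_mul_of_nonneg_left IH (by positivity)
      _ ≤ (k:ℝ)^k * (ν a + ∑ i ∈ s, ν i) ^ (k+1) := key1 k hA hS

/-- Key elementary symmetric inequality: `card^(card-2) * e_{card-1}(ν) ≤ (∑ν)^(card-1)`. -/
lemma esymm_bound {ι : Type*} [DecidableEq ι] (s : Finset ι) (ν : ι → ℝ) :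
    (∀ i ∈ s, 0 ≤ ν i) →
    (s.card : ℝ) ^ (s.card - 2) * ∑ i ∈ s, ∏ j ∈ s.erase i, ν j
      ≤ (∑ i ∈ s, ν i) ^ (s.card - 1) := by
  induction s using Finset.cons_induction with
  | empty => intro _; simp
  | cons a s ha ih =>
    intro hν
    have hA : 0 ≤ ν a := hν a (mem_cons_self a s)
    have hν' : ∀ i ∈ s, 0 ≤ ν i := fun i hi => hν i (mem_cons_of_mem hi)
    have hP : 0 ≤ ∏ i ∈ s, ν i := prod_nonneg hν'
    have hS : 0 ≤ ∑ i ∈ s, ν i := sum_nonneg hν'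
    have hE : 0 ≤ ∑ i ∈ s, ∏ j ∈ s.erase i, ν j :=
      sum_nonneg fun i hi => prod_nonneg fun j hj => hν' j (mem_of_mem_erase hj)
    have IH := ih hν'
    -- decompose the sum
    have hdec : ∑ i ∈ cons a s ha, ∏ j ∈ (cons a s ha).erase i, ν j
        = (∏ j ∈ s, ν j) + ν a * ∑ i ∈ s, ∏ j ∈ s.erase i, ν j := by
      rw [sum_cons, erase_cons]
      congr 1
      rw [mul_sum]
      apply sum_congr rfl
      intro i hi
      have hai : a ∉ s.erase i := fun h => ha (mem_of_mem_erase h)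
      have hne : a ≠ i := fun h => ha (h ▸ hi)
      have : (cons a s ha).erase i = insert a (s.erase i) := by
        rw [cons_eq_insert, Finset.erase_insert_of_ne hne]
      rw [this, prod_insert hai]
    rw [hdec, card_cons, sum_cons]
    rcases Finset.eq_empty_or_nonempty s with rfl | hsne
    · simp
    set k := s.card with hk
    have hk1 : 1 ≤ k := card_pos.mpr hsne
    · -- k ≥ 1
      have hkpos := cast_pow_self_pos k
      have hexp1 : k + 1 - 2 = k - 1 := by omega
      have hexp2 : k + 1 - 1 = k := by omega
      rw [hexp1, hexp2]
      rw [← mul_le_mul_iff_right₀ hkpos]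
      have hkE : (k:ℝ)^k * ∑ i ∈ s, ∏ j ∈ s.erase i, ν j ≤ (k:ℝ)^2 * (∑ i ∈ s, ν i)^(k-1) := by
        rcases Nat.eq_or_lt_of_le hk1 with h1 | h2
        · -- k = 1
          rw [← h1] at IH ⊢
          norm_num
          simpa using IH
        · -- k ≥ 2
          have : (k:ℝ)^k = (k:ℝ)^2 * (k:ℝ)^(k-2) := by
            rw [← pow_add]; congr 1; omega
          rw [this, mul_assoc]
          exact mul_le_mul_of_nonneg_left IH (by positivity)
      have hAMGM : (k:ℝ)^k * ∏ j ∈ s, ν j ≤ (∑ i ∈ s, ν i)^k := amgm_pow s ν hν'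
      push_cast
      calc (k:ℝ)^k * (((k:ℝ)+1)^(k-1) * ((∏ j ∈ s, ν j) + ν a * ∑ i ∈ s, ∏ j ∈ s.erase i, ν j))
          = ((k:ℝ)+1)^(k-1) * ((k:ℝ)^k * ∏ j ∈ s, ν j + ν a * ((k:ℝ)^k * ∑ i ∈ s, ∏ j ∈ s.erase i, ν j)) := by ring
        _ ≤ ((k:ℝ)+1)^(k-1) * ((∑ i ∈ s, ν i)^k + ν a * ((k:ℝ)^2 * (∑ i ∈ s, ν i)^(k-1))) := by
            apply mul_le_mul_of_nonneg_left _ (by positivity)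
            apply add_le_add hAMGM
            exact mul_le_mul_of_nonneg_left hkE hA
        _ = ((k:ℝ)+1)^(k-1) * (∑ i ∈ s, ν i)^(k-1) * ((∑ i ∈ s, ν i) + (k:ℝ)^2 * ν a) := by
            have : (∑ i ∈ s, ν i)^k = (∑ i ∈ s, ν i)^(k-1) * (∑ i ∈ s, ν i) := by
              rw [← pow_succ]; congr 1; omega
            rw [this]; ring
        _ ≤ (k:ℝ)^k * (ν a + ∑ i ∈ s, ν i)^k := key2 hk1 hA hS

/-- Per-edge inequality at `p = 2`:
`(∑ √tᵢ)² * r^(r-2) ≤ ∏ (r-1+tᵢ)` for `card e = r ≥ 2`, `tᵢ ≥ 0`. -/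
lemma edge_sq {ι : Type*} [DecidableEq ι] {r : ℕ} (hr : 2 ≤ r) (e : Finset ι)
    (hcard : e.card = r) (t : ι → ℝ) (ht : ∀ i ∈ e, 0 ≤ t i) :
    (∑ i ∈ e, Real.sqrt (t i)) ^ 2 * (r:ℝ) ^ (r - 2) ≤ ∏ i ∈ e, ((r:ℝ) - 1 + t i) := by
  have hR : (2:ℝ) ≤ (r:ℝ) := by exact_mod_cast hr
  have hpos : ∀ i ∈ e, 0 < (r:ℝ) - 1 + t i := fun i hi => by
    have := ht i hi; linarith
  -- Cauchy-Schwarz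
  have hCS : (∑ i ∈ e, Real.sqrt (t i)) ^ 2
      ≤ (∑ i ∈ e, t i / ((r:ℝ) - 1 + t i)) * ∑ i ∈ e, ((r:ℝ) - 1 + t i) := by
    apply sum_sq_le_sum_mul_sum_of_sq_eq_mul
    · intro i hi; exact div_nonneg (ht i hi) (hpos i hi).le
    · intro i hi; exact (hpos i hi).le
    · intro i hi
      rw [Real.sq_sqrt (ht i hi), div_mul_cancel₀ _ (hpos i hi).ne']
  set ν : ι → ℝ := fun i => ((r:ℝ) - 1) / ((r:ℝ) - 1 + t i) with hν
  have hν0 : ∀ i ∈ e, 0 < ν i := fun i hi => div_pos (by linarith) (hpos i hi)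
  have hν1 : ∀ i ∈ e, ν i ≤ 1 := fun i hi => by
    rw [hν]
    rw [div_le_one (hpos i hi)]
    have := ht i hi; linarith
  set σ := ∑ i ∈ e, ν i with hσ
  have hσ0 : 0 ≤ σ := sum_nonneg fun i hi => (hν0 i hi).le
  have hσr : σ ≤ (r:ℝ) := by
    rw [hσ]
    calc ∑ i ∈ e, ν i ≤ ∑ i ∈ e, (1:ℝ) := sum_le_sum hν1
      _ = (r:ℝ) := by rw [sum_const, hcard]; simp
  -- first factor
  have hf : ∑ i ∈ e, t i / ((r:ℝ) - 1 + t i) = (r:ℝ) - σ := by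
    have : ∀ i ∈ e, t i / ((r:ℝ) - 1 + t i) = 1 - ν i := by
      intro i hi
      rw [hν]
      rw [eq_sub_iff_add_eq, ← add_div, div_eq_one_iff_eq (hpos i hi).ne']
      ring
    rw [sum_congr rfl this, sum_sub_distrib, sum_const, hcard, hσ]
    simp
  -- products
  have hprodnu : 0 < ∏ i ∈ e, ν i := prod_pos hν0
  have hA2 : (∑ i ∈ e, ((r:ℝ) - 1 + t i)) * ∏ i ∈ e, ν i
      = ((r:ℝ) - 1) * ∑ i ∈ e, ∏ j ∈ e.erase i, ν j := by
    rw [sum_mul, mul_sum]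
    apply sum_congr rfl
    intro i hi
    rw [← Finset.mul_prod_erase e ν hi]
    have : ((r:ℝ) - 1 + t i) * ν i = (r:ℝ) - 1 := by
      rw [hν]
      show ((r:ℝ) - 1 + t i) * (((r:ℝ) - 1) / ((r:ℝ) - 1 + t i)) = (r:ℝ) - 1
      rw [← mul_div_assoc]
      exact mul_div_cancel_left₀ _ (hpos i hi).ne'
    calc ((r:ℝ) - 1 + t i) * (ν i * ∏ j ∈ e.erase i, ν j)
        = (((r:ℝ) - 1 + t i) * ν i) * ∏ j ∈ e.erase i, ν j := by ring
      _ = ((r:ℝ) - 1) * ∏ j ∈ e.erase i, ν j := by rw [this]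
  have hA3 : (∏ i ∈ e, ((r:ℝ) - 1 + t i)) * ∏ i ∈ e, ν i = ((r:ℝ) - 1) ^ r := by
    rw [← prod_mul_distrib]
    have : ∀ i ∈ e, ((r:ℝ) - 1 + t i) * ν i = (r:ℝ) - 1 := by
      intro i hi
      rw [hν]
      show ((r:ℝ) - 1 + t i) * (((r:ℝ) - 1) / ((r:ℝ) - 1 + t i)) = (r:ℝ) - 1
      rw [← mul_div_assoc]
      exact mul_div_cancel_left₀ _ (hpos i hi).ne'
    rw [prod_congr rfl this, prod_const, hcard]
  have hesymm := esymm_bound e ν fun i hi => (hν0 i hi).le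
  rw [hcard] at hesymm
  have hE0 : 0 ≤ ∑ i ∈ e, ∏ j ∈ e.erase i, ν j :=
    sum_nonneg fun i hi => prod_nonneg fun j hj => (hν0 j (mem_of_mem_erase hj)).le
  -- main chain, multiplied by ∏ν
  have hmain : ((∑ i ∈ e, Real.sqrt (t i)) ^ 2 * (r:ℝ) ^ (r - 2)) * ∏ i ∈ e, ν i
      ≤ (∏ i ∈ e, ((r:ℝ) - 1 + t i)) * ∏ i ∈ e, ν i := by
    rw [hA3]
    calc ((∑ i ∈ e, Real.sqrt (t i)) ^ 2 * (r:ℝ) ^ (r - 2)) * ∏ i ∈ e, ν i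
        ≤ (((r:ℝ) - σ) * ∑ i ∈ e, ((r:ℝ) - 1 + t i)) * (r:ℝ) ^ (r - 2) * ∏ i ∈ e, ν i := by
          have h1 : (∑ i ∈ e, Real.sqrt (t i)) ^ 2 ≤ ((r:ℝ) - σ) * ∑ i ∈ e, ((r:ℝ) - 1 + t i) := by
            rw [← hf]; exact hCS
          have h2 : (0:ℝ) ≤ (r:ℝ) ^ (r-2) * ∏ i ∈ e, ν i := by positivity
          nlinarith [h2, h1, sq_nonneg (∑ i ∈ e, Real.sqrt (t i))]
      _ = ((r:ℝ) - σ) * (r:ℝ) ^ (r - 2) * ((∑ i ∈ e, ((r:ℝ) - 1 + t i)) * ∏ i ∈ e, ν i) := by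
          ring
      _ = ((r:ℝ) - σ) * (r:ℝ) ^ (r - 2) * (((r:ℝ) - 1) * ∑ i ∈ e, ∏ j ∈ e.erase i, ν j) := by
          rw [hA2]
      _ = ((r:ℝ) - σ) * ((r:ℝ) - 1) * ((r:ℝ) ^ (r - 2) * ∑ i ∈ e, ∏ j ∈ e.erase i, ν j) := by
          ring
      _ ≤ ((r:ℝ) - σ) * ((r:ℝ) - 1) * σ ^ (r - 1) := by
          apply mul_le_mul_of_nonneg_left hesymm
          have : 0 ≤ (r:ℝ) - σ := by linarith
          have h1 : (0:ℝ) ≤ (r:ℝ) - 1 := by linarith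
          positivity
      _ = ((r:ℝ) - 1) * (((r:ℝ) - σ) * σ ^ (r-1)) := by ring
      _ ≤ ((r:ℝ) - 1) * ((r:ℝ) - 1) ^ (r-1) := by
          apply mul_le_mul_of_nonneg_left (key3 hr hσ0) (by linarith)
      _ = ((r:ℝ) - 1) ^ r := by
          rw [← pow_succ']; congr 1; omega
  exact le_of_mul_le_mul_right hmain hprodnu

/-- Per-edge inequality, general `p ≥ 2`. -/
lemma edge_rpow {ι : Type*} [DecidableEq ι] {r : ℕ} (hr : 2 ≤ r) {p : ℝ} (hp : 2 ≤ p)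
    (e : Finset ι) (hcard : e.card = r) (t : ι → ℝ) (ht : ∀ i ∈ e, 0 ≤ t i) :
    ∑ i ∈ e, (t i) ^ (1/p) ≤ (r:ℝ) ^ (1 - (r:ℝ)/p) * ∏ i ∈ e, ((r:ℝ) - 1 + t i) ^ (1/p) := by
  have hp0 : (0:ℝ) < p := by linarith
  have hR : (2:ℝ) ≤ (r:ℝ) := by exact_mod_cast hr
  have hR0 : (0:ℝ) < (r:ℝ) := by linarith
  have hpos : ∀ i ∈ e, (0:ℝ) ≤ (r:ℝ) - 1 + t i := fun i hi => by
    have := ht i hi; linarith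
  have hsq0 : (0:ℝ) ≤ ∑ i ∈ e, Real.sqrt (t i) :=
    sum_nonneg fun i _ => Real.sqrt_nonneg _
  have hPr0 : (0:ℝ) ≤ ∏ i ∈ e, ((r:ℝ) - 1 + t i) := prod_nonneg hpos
  -- Step 1: power mean
  have step1 : ∑ i ∈ e, (t i) ^ (1/p)
      ≤ (r:ℝ) ^ (1 - 2/p) * (∑ i ∈ e, Real.sqrt (t i)) ^ (2/p) := by
    have hm : (1:ℝ) ≤ p/2 := by linarith
    have hPM := Real.arith_mean_le_rpow_mean e (fun _ => ((r:ℝ))⁻¹)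
      (fun i => (t i) ^ (1/p)) (fun i _ => by positivity)
      (by rw [sum_const, hcard, nsmul_eq_mul]; field_simp)
      (fun i hi => Real.rpow_nonneg (ht i hi) _) hm
    have hz : ∀ i ∈ e, ((r:ℝ))⁻¹ * ((t i) ^ (1/p)) ^ (p/2) = ((r:ℝ))⁻¹ * Real.sqrt (t i) := by
      intro i hi
      congr 1
      rw [← Real.rpow_mul (ht i hi)]
      rw [show (1/p) * (p/2) = (1/2 : ℝ) by field_simp]
      rw [Real.sqrt_eq_rpow]
    rw [sum_congr rfl hz] at hPM
    rw [← mul_sum, ← mul_sum] at hPM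
    have h2p : 1 / (p/2) = 2/p := by field_simp
    rw [h2p] at hPM
    have hmulrpow : (((r:ℝ))⁻¹ * ∑ i ∈ e, Real.sqrt (t i)) ^ (2/p)
        = ((r:ℝ))⁻¹ ^ (2/p) * (∑ i ∈ e, Real.sqrt (t i)) ^ (2/p) :=
      Real.mul_rpow (by positivity) hsq0
    rw [hmulrpow] at hPM
    -- multiply both sides by r
    have := mul_le_mul_of_nonneg_left hPM hR0.le
    calc ∑ i ∈ e, (t i) ^ (1/p)
        = (r:ℝ) * (((r:ℝ))⁻¹ * ∑ i ∈ e, (t i) ^ (1/p)) := by field_simp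
      _ ≤ (r:ℝ) * (((r:ℝ))⁻¹ ^ (2/p) * (∑ i ∈ e, Real.sqrt (t i)) ^ (2/p)) := this
      _ = (r:ℝ) ^ (1 - 2/p) * (∑ i ∈ e, Real.sqrt (t i)) ^ (2/p) := by
          rw [← mul_assoc]
          congr 1
          rw [Real.inv_rpow hR0.le, Real.rpow_sub hR0, Real.rpow_one]
          rw [div_eq_mul_inv ((r:ℝ)) _]
  -- Step 2
  have hcast : ((r:ℝ)) ^ ((r:ℝ) - 2) = ((r:ℝ)) ^ (r - 2 : ℕ) := by
    rw [← Real.rpow_natCast ((r:ℝ)) (r-2)]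
    congr 1
    have : (2:ℕ) ≤ r := hr
    push_cast [Nat.cast_sub this]
    ring
  have step2 : (∑ i ∈ e, Real.sqrt (t i)) ^ (2/p)
      ≤ ((r:ℝ) ^ ((2:ℝ) - (r:ℝ)) * ∏ i ∈ e, ((r:ℝ) - 1 + t i)) ^ (1/p) := by
    have hsq : (∑ i ∈ e, Real.sqrt (t i)) ^ (2:ℕ)
        ≤ (r:ℝ) ^ ((2:ℝ) - (r:ℝ)) * ∏ i ∈ e, ((r:ℝ) - 1 + t i) := by
      have hesq := edge_sq hr e hcard t ht
      have h1 : (∑ i ∈ e, Real.sqrt (t i)) ^ (2:ℕ)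
          = ((∑ i ∈ e, Real.sqrt (t i)) ^ (2:ℕ) * (r:ℝ) ^ (r-2:ℕ)) * (r:ℝ) ^ ((2:ℝ) - (r:ℝ)) := by
        rw [mul_assoc, ← hcast, ← Real.rpow_add hR0]
        norm_num
      rw [h1]
      rw [mul_comm ((r:ℝ) ^ ((2:ℝ) - (r:ℝ))) _]
      exact mul_le_mul_of_nonneg_right hesq (Real.rpow_nonneg hR0.le _)
    calc (∑ i ∈ e, Real.sqrt (t i)) ^ (2/p)
        = ((∑ i ∈ e, Real.sqrt (t i)) ^ (2:ℕ)) ^ (1/p) := by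
          rw [← Real.rpow_natCast _ 2, ← Real.rpow_mul hsq0]
          congr 1
          ring
      _ ≤ ((r:ℝ) ^ ((2:ℝ) - (r:ℝ)) * ∏ i ∈ e, ((r:ℝ) - 1 + t i)) ^ (1/p) := by
          apply Real.rpow_le_rpow (by positivity) hsq (by positivity)
  -- combine
  calc ∑ i ∈ e, (t i) ^ (1/p)
      ≤ (r:ℝ) ^ (1 - 2/p) * (∑ i ∈ e, Real.sqrt (t i)) ^ (2/p) := step1
    _ ≤ (r:ℝ) ^ (1 - 2/p) * ((r:ℝ) ^ ((2:ℝ) - (r:ℝ)) * ∏ i ∈ e, ((r:ℝ) - 1 + t i)) ^ (1/p) := by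
        apply mul_le_mul_of_nonneg_left step2 (by positivity)
    _ = (r:ℝ) ^ (1 - (r:ℝ)/p) * ∏ i ∈ e, ((r:ℝ) - 1 + t i) ^ (1/p) := by
        rw [Real.mul_rpow (by positivity) hPr0]
        rw [← Real.rpow_mul hR0.le, ← mul_assoc, ← Real.rpow_add hR0]
        rw [Real.finset_prod_rpow e _ hpos]
        congr 2
        field_simp
        ring

lemma hypSpecRad_bddAbove {n r : ℕ} {p : ℝ} (hp : 0 < p)
    (G : Finset (Finset (Fin n))) :
    BddAbove {v | ∃ x : Fin n → ℝ, lpNorm p x = 1 ∧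
      v = (r.factorial : ℝ) * ∑ e ∈ G, ∏ i ∈ e, x i} := by
  use (r.factorial : ℝ) * G.card
  rintro v ⟨x, hx, rfl⟩
  have hsum : ∑ i, |x i| ^ p = 1 := by
    have h0 : (0:ℝ) ≤ ∑ i, |x i| ^ p :=
      sum_nonneg fun i _ => Real.rpow_nonneg (abs_nonneg _) _
    have h1 := congrArg (fun y : ℝ => y ^ p) hx
    simp only [lpNorm] at h1
    rwa [← Real.rpow_mul h0, one_div, inv_mul_cancel₀ hp.ne', Real.rpow_one,
      Real.one_rpow] at h1
  have habs : ∀ i, |x i| ≤ 1 := by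
    intro i
    by_contra habs
    push_neg at habs
    have h1 : (1:ℝ) < |x i| ^ p :=
      (Real.one_lt_rpow_iff_of_pos (by linarith)).mpr (Or.inl ⟨habs, hp⟩)
    have hle : |x i| ^ p ≤ ∑ j, |x j| ^ p :=
      Finset.single_le_sum (f := fun j => |x j| ^ p)
        (fun j _ => Real.rpow_nonneg (abs_nonneg _) _) (mem_univ i)
    rw [hsum] at hle; linarith
  calc (r.factorial : ℝ) * ∑ e ∈ G, ∏ i ∈ e, x i
      ≤ (r.factorial : ℝ) * ∑ e ∈ G, (1:ℝ) := by
        apply mul_le_mul_of_nonneg_left _ (by positivity)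
        apply sum_le_sum
        intro e _
        calc ∏ i ∈ e, x i ≤ |∏ i ∈ e, x i| := le_abs_self _
          _ = ∏ i ∈ e, |x i| := by rw [Finset.abs_prod]
          _ ≤ 1 := Finset.prod_le_one (fun i _ => abs_nonneg _) (fun i _ => habs i)
    _ = (r.factorial : ℝ) * G.card := by rw [sum_const]; simp

/-- **Corollary (cogr).** Let `G` be an `r`-uniform hypergraph of order `n`
with degrees `d₁, …, d_n`, `r ≥ 2`, `p ≥ 2`. Then
`ρ⁽ᵖ⁾(G) ≥ (r-1)! n^{1-r/p} ((d₁^{p/(p-1)} + ⋯ + d_n^{p/(p-1)})/n)^{(p-1)/p}`. -/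
theorem hypSpecRad_lower_bound_degrees {r n : ℕ} (hr : 2 ≤ r) {p : ℝ} (hp : 2 ≤ p)
    (G : Finset (Finset (Fin n))) (hG : ∀ e ∈ G, e.card = r)
    (d : Fin n → ℕ) (hd : ∀ i, d i = (G.filter (fun e => i ∈ e)).card) :
    ((r - 1).factorial : ℝ) * (n : ℝ) ^ (1 - (r : ℝ) / p) *
        ((1 / (n : ℝ)) * ∑ i, (d i : ℝ) ^ (p / (p - 1))) ^ ((p - 1) / p)
      ≤ hypSpecRad r p G := by
  have hp0 : (0:ℝ) < p := by linarith
  have hp1 : (0:ℝ) < p - 1 := by linarith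
  have hq0 : (0:ℝ) < p / (p - 1) := by positivity
  have hc0 : (0:ℝ) < (p - 1) / p := by positivity
  rcases Nat.eq_zero_or_pos n with hn0 | hn1
  · -- n = 0 : the feasible set is empty
    subst hn0
    have hset : {v | ∃ x : Fin 0 → ℝ, lpNorm p x = 1 ∧
        v = (r.factorial : ℝ) * ∑ e ∈ G, ∏ i ∈ e, x i} = ∅ := by
      ext v
      simp only [Set.mem_setOf_eq, Set.mem_empty_iff_false, iff_false, not_exists]
      intro x ⟨hx, _⟩
      have : lpNorm p x = 0 := by
        simp only [lpNorm, Finset.univ_eq_empty, Finset.sum_empty]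
        rw [Real.zero_rpow (by positivity : (1/p : ℝ) ≠ 0)]
      rw [this] at hx
      exact one_ne_zero hx.symm
    have hLHS : ((1 / ((0:ℕ) : ℝ)) * ∑ i : Fin 0, (d i : ℝ) ^ (p / (p - 1))) ^ ((p - 1) / p)
        = 0 := by
      simp [Real.zero_rpow hc0.ne']
    rw [hypSpecRad, hset, Real.sSup_empty, hLHS, mul_zero]
  rcases Finset.eq_empty_or_nonempty G with rfl | hGne
  · -- G = ∅
    have hd0 : ∀ i, d i = 0 := by intro i; rw [hd i]; simp
    have hLHS : ((1 / (n : ℝ)) * ∑ i, (d i : ℝ) ^ (p / (p - 1))) ^ ((p - 1) / p) = 0 := by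
      have : ∀ i ∈ (univ : Finset (Fin n)), (d i : ℝ) ^ (p / (p - 1)) = 0 := by
        intro i _
        rw [hd0 i]
        norm_num
        exact Real.zero_rpow hq0.ne'
      rw [sum_congr rfl this, sum_const, smul_zero, mul_zero]
      exact Real.zero_rpow hc0.ne'
    rw [hLHS, mul_zero]
    -- exhibit the basis vector for nonemptiness
    have i0 : Fin n := ⟨0, hn1⟩
    set x : Fin n → ℝ := fun i => if i = i0 then (1:ℝ) else 0 with hxdef
    have hxnorm : lpNorm p x = 1 := by
      have hsum : ∑ i, |x i| ^ p = 1 := by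
        rw [Finset.sum_eq_single i0]
        · simp [hxdef, Real.one_rpow]
        · intro j _ hj
          simp [hxdef, hj, Real.zero_rpow hp0.ne']
        · intro h; exact absurd (mem_univ i0) h
      rw [lpNorm, hsum, Real.one_rpow]
    apply le_csSup (hypSpecRad_bddAbove hp0 _)
    exact ⟨x, hxnorm, by simp⟩
  · obtain ⟨e0, he0⟩ := hGne
    obtain ⟨i1, hi1⟩ : e0.Nonempty := by
      rw [← Finset.card_pos, hG e0 he0]; omega
    have hd1 : 1 ≤ d i1 := by
      rw [hd i1]
      exact Finset.card_pos.mpr ⟨e0, Finset.mem_filter.mpr ⟨he0, hi1⟩⟩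
    set q : ℝ := p / (p - 1) with hqdef
    set S : ℝ := ∑ i, (d i : ℝ) ^ q with hSdef
    have hSnn : ∀ i ∈ (univ : Finset (Fin n)), (0:ℝ) ≤ (d i:ℝ) ^ q :=
      fun i _ => Real.rpow_nonneg (Nat.cast_nonneg _) _
    have hS1 : (1:ℝ) ≤ S := by
      calc (1:ℝ) = 1 ^ q := (Real.one_rpow q).symm
        _ ≤ (d i1 : ℝ) ^ q :=
            Real.rpow_le_rpow (by norm_num) (by exact_mod_cast hd1) hq0.le
        _ ≤ S := Finset.single_le_sum hSnn (mem_univ i1)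
    have hS0 : (0:ℝ) < S := lt_of_lt_of_le one_pos hS1
    have hn0R : (0:ℝ) < (n:ℝ) := by exact_mod_cast hn1
    have hR2 : (2:ℝ) ≤ (r:ℝ) := by exact_mod_cast hr
    have hR0 : (0:ℝ) < (r:ℝ) := by linarith
    set lam : Fin n → ℝ := fun i => (d i:ℝ) ^ q / S with hlam
    have hlam0 : ∀ i, 0 ≤ lam i :=
      fun i => div_nonneg (Real.rpow_nonneg (Nat.cast_nonneg _) _) hS0.le
    have hsumlam : ∑ i, lam i = 1 := by
      rw [hlam, ← Finset.sum_div, ← hSdef, div_self hS0.ne']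
    set base : Fin n → ℝ := fun i => ((r:ℝ) - 1 + (n:ℝ) * lam i) / ((r:ℝ) * (n:ℝ)) with hbase
    have hbase0 : ∀ i, 0 < base i := by
      intro i
      apply div_pos _ (by positivity)
      have := hlam0 i
      nlinarith
    set z : Fin n → ℝ := fun i => (base i) ^ (1/p) with hz
    have hz0 : ∀ i, 0 ≤ z i := fun i => Real.rpow_nonneg (hbase0 i).le _
    have hzp : ∀ i, (z i) ^ p = base i := by
      intro i
      rw [hz, ← Real.rpow_mul (hbase0 i).le, one_div_mul_cancel hp0.ne', Real.rpow_one]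
    have hsumbase : ∑ i, base i = 1 := by
      rw [hbase]
      calc ∑ i, ((r:ℝ) - 1 + (n:ℝ) * lam i) / ((r:ℝ) * (n:ℝ))
          = (∑ i, ((r:ℝ) - 1 + (n:ℝ) * lam i)) / ((r:ℝ) * (n:ℝ)) := by rw [Finset.sum_div]
        _ = ((n:ℝ) * ((r:ℝ) - 1) + (n:ℝ) * 1) / ((r:ℝ) * (n:ℝ)) := by
            rw [Finset.sum_add_distrib, Finset.sum_const, ← Finset.mul_sum, hsumlam]
            simp [card_univ, nsmul_eq_mul]
        _ = 1 := by field_simp; ring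
    have hznorm : lpNorm p z = 1 := by
      have habs : ∀ i ∈ (univ : Finset (Fin n)), |z i| ^ p = base i := fun i _ => by
        rw [abs_of_nonneg (hz0 i), hzp i]
      rw [lpNorm, sum_congr rfl habs, hsumbase, Real.one_rpow]
    set lampow : Fin n → ℝ := fun i => (lam i) ^ (1/p) with hlampow
    -- Step A : ∑ d·lam^{1/p} = S^{(p-1)/p}
    have hA : ∑ i, (d i:ℝ) * lampow i = S ^ ((p-1)/p) := by
      have hper : ∀ i ∈ (univ : Finset (Fin n)),
          (d i:ℝ) * lampow i = (d i:ℝ) ^ q / S ^ (1/p) := by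
        intro i _
        rcases Nat.eq_zero_or_pos (d i) with h0 | h1
        · simp only [hlampow, hlam]
          rw [h0]
          push_cast
          rw [Real.zero_rpow hq0.ne']
          simp
        · have hdpos : (0:ℝ) < (d i:ℝ) := by exact_mod_cast h1
          simp only [hlampow, hlam]
          rw [Real.div_rpow (Real.rpow_nonneg hdpos.le _) hS0.le,
            ← Real.rpow_mul hdpos.le, mul_div_assoc']
          congr 1
          nth_rewrite 1 [← Real.rpow_one (d i:ℝ)]
          rw [← Real.rpow_add hdpos]
          congr 1
          rw [hqdef]
          field_simp
          ring
      rw [sum_congr rfl hper, ← Finset.sum_div, ← hSdef]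
      rw [show (p-1)/p = 1 - 1/p by field_simp, Real.rpow_sub hS0, Real.rpow_one]
    -- Step B : double counting
    have hB : ∑ i, (d i:ℝ) * lampow i = ∑ e ∈ G, ∑ i ∈ e, lampow i := by
      have h1 : ∀ e ∈ G, ∑ i ∈ e, lampow i
          = ∑ i : Fin n, if i ∈ e then lampow i else 0 := by
        intro e _
        rw [Finset.sum_ite_mem, univ_inter]
      rw [sum_congr rfl h1, Finset.sum_comm]
      apply sum_congr rfl
      intro i _
      rw [← Finset.sum_filter, Finset.sum_const, hd i, nsmul_eq_mul]
    -- Step C : per-edge bound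
    have hC : ∀ e ∈ G, ∑ i ∈ e, lampow i
        ≤ (r:ℝ) * (n:ℝ) ^ (((r:ℝ)-1)/p) * ∏ i ∈ e, z i := by
      intro e he
      have hPE := edge_rpow hr hp e (hG e he) (fun i => (n:ℝ) * lam i)
        (fun i _ => mul_nonneg hn0R.le (hlam0 i))
      have hL : ∑ i ∈ e, ((n:ℝ) * lam i) ^ (1/p) = (n:ℝ) ^ (1/p) * ∑ i ∈ e, lampow i := by
        rw [mul_sum]
        apply sum_congr rfl
        intro i _
        simp only [hlampow]
        rw [Real.mul_rpow hn0R.le (hlam0 i)]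
      have hRfac : ∀ i ∈ e, ((r:ℝ) - 1 + (n:ℝ) * lam i) ^ (1/p)
          = ((r:ℝ) * (n:ℝ)) ^ (1/p) * z i := by
        intro i _
        have hbeq : (r:ℝ) - 1 + (n:ℝ) * lam i = ((r:ℝ) * (n:ℝ)) * base i := by
          simp only [hbase]
          field_simp
        rw [hbeq, Real.mul_rpow (by positivity) (hbase0 i).le]
      have hprod : ∏ i ∈ e, ((r:ℝ) - 1 + (n:ℝ) * lam i) ^ (1/p)
          = ((r:ℝ) * (n:ℝ)) ^ ((r:ℝ)/p) * ∏ i ∈ e, z i := by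
        rw [prod_congr rfl hRfac, prod_mul_distrib, prod_const, hG e he]
        congr 1
        rw [← Real.rpow_natCast (((r:ℝ) * (n:ℝ)) ^ (1/p)) r, ← Real.rpow_mul (by positivity)]
        congr 1
        ring
      rw [hL, hprod] at hPE
      have e1 : (r:ℝ) ^ (1-(r:ℝ)/p) * (r:ℝ) ^ ((r:ℝ)/p) = (r:ℝ) := by
        rw [← Real.rpow_add hR0]
        norm_num
      have e2 : (n:ℝ) ^ ((r:ℝ)/p) = (n:ℝ) ^ (1/p) * (n:ℝ) ^ (((r:ℝ)-1)/p) := by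
        rw [← Real.rpow_add hn0R]
        congr 1
        ring
      have hrn : ((r:ℝ) * (n:ℝ)) ^ ((r:ℝ)/p) = (r:ℝ) ^ ((r:ℝ)/p) * (n:ℝ) ^ ((r:ℝ)/p) :=
        Real.mul_rpow hR0.le hn0R.le
      rw [hrn] at hPE
      have hfinal : (n:ℝ) ^ (1/p) * ∑ i ∈ e, lampow i
          ≤ (n:ℝ) ^ (1/p) * ((r:ℝ) * (n:ℝ) ^ (((r:ℝ)-1)/p) * ∏ i ∈ e, z i) := by
        calc (n:ℝ) ^ (1/p) * ∑ i ∈ e, lampow i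
            ≤ (r:ℝ) ^ (1-(r:ℝ)/p) * ((r:ℝ) ^ ((r:ℝ)/p) * (n:ℝ) ^ ((r:ℝ)/p) * ∏ i ∈ e, z i) := hPE
          _ = ((r:ℝ) ^ (1-(r:ℝ)/p) * (r:ℝ) ^ ((r:ℝ)/p)) * ((n:ℝ) ^ (1/p) * (n:ℝ) ^ (((r:ℝ)-1)/p))
                * ∏ i ∈ e, z i := by rw [← e2]; ring
          _ = (n:ℝ) ^ (1/p) * ((r:ℝ) * (n:ℝ) ^ (((r:ℝ)-1)/p) * ∏ i ∈ e, z i) := by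
              rw [e1]; ring
      exact le_of_mul_le_mul_left hfinal (by positivity)
    -- Step D
    have hD : S ^ ((p-1)/p) ≤ (r:ℝ) * (n:ℝ) ^ (((r:ℝ)-1)/p) * ∑ e ∈ G, ∏ i ∈ e, z i := by
      rw [← hA, hB]
      calc ∑ e ∈ G, ∑ i ∈ e, lampow i
          ≤ ∑ e ∈ G, (r:ℝ) * (n:ℝ) ^ (((r:ℝ)-1)/p) * ∏ i ∈ e, z i := sum_le_sum hC
        _ = (r:ℝ) * (n:ℝ) ^ (((r:ℝ)-1)/p) * ∑ e ∈ G, ∏ i ∈ e, z i := by rw [← mul_sum]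
    -- final algebra
    have hF : ((r-1).factorial:ℝ) * (n:ℝ) ^ (1-(r:ℝ)/p) * ((1/(n:ℝ)) * S) ^ ((p-1)/p)
        = ((r-1).factorial:ℝ) * ((n:ℝ) ^ ((1-(r:ℝ))/p) * S ^ ((p-1)/p)) := by
      have h1 : (1/(n:ℝ)) * S = S / (n:ℝ) := by ring
      rw [h1, Real.div_rpow hS0.le hn0R.le]
      have h2 : (n:ℝ) ^ (1-(r:ℝ)/p) / (n:ℝ) ^ ((p-1)/p) = (n:ℝ) ^ ((1-(r:ℝ))/p) := by
        rw [← Real.rpow_sub hn0R]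
        congr 1
        field_simp
        ring
      rw [← h2]
      ring
    have hface : ((r-1).factorial:ℝ) * (r:ℝ) = (r.factorial:ℝ) := by
      have h := Nat.mul_factorial_pred (by omega : r ≠ 0)
      have : (r:ℝ) * ((r-1).factorial:ℝ) = (r.factorial:ℝ) := by exact_mod_cast h
      linarith [this]
    have hcancel : (n:ℝ) ^ ((1-(r:ℝ))/p) * (n:ℝ) ^ (((r:ℝ)-1)/p) = 1 := by
      rw [← Real.rpow_add hn0R, show (1-(r:ℝ))/p + ((r:ℝ)-1)/p = 0 by ring, Real.rpow_zero]
    have hchain : ((r-1).factorial:ℝ) * (n:ℝ) ^ (1-(r:ℝ)/p) * ((1/(n:ℝ)) * S) ^ ((p-1)/p)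
        ≤ (r.factorial:ℝ) * ∑ e ∈ G, ∏ i ∈ e, z i := by
      rw [hF]
      calc ((r-1).factorial:ℝ) * ((n:ℝ) ^ ((1-(r:ℝ))/p) * S ^ ((p-1)/p))
          ≤ ((r-1).factorial:ℝ) * ((n:ℝ) ^ ((1-(r:ℝ))/p)
              * ((r:ℝ) * (n:ℝ) ^ (((r:ℝ)-1)/p) * ∑ e ∈ G, ∏ i ∈ e, z i)) := by
            apply mul_le_mul_of_nonneg_left _ (by positivity)
            exact mul_le_mul_of_nonneg_left hD (Real.rpow_nonneg hn0R.le _)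
        _ = (((r-1).factorial:ℝ) * (r:ℝ)) * (((n:ℝ) ^ ((1-(r:ℝ))/p) * (n:ℝ) ^ (((r:ℝ)-1)/p)))
              * ∑ e ∈ G, ∏ i ∈ e, z i := by ring
        _ = (r.factorial:ℝ) * ∑ e ∈ G, ∏ i ∈ e, z i := by
            rw [hface, hcancel, mul_one]
    exact le_trans hchain (le_csSup (hypSpecRad_bddAbove hp0 G) ⟨z, hznorm, rfl⟩)
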